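/- arXiv:2309.01556 — 2 statements merged into one kernel-verified Lean document; each statement's English description precedes it below -/
import Mathlib

section
/- Let p ≥ 3, n ≥ k ≥ 1, and n0 = n−k+1. For every j ∈ [n0, n] and every i ∈ [0, p^n−1], the suffix of length j of h^{n,k}_{[i]} equals h^{j, k−n+j}_{[i mod p^j]}. In particular, for every j ∈ [n0,n] the sequence of length-j suffixes of the terms of h^{n,k} is p^j-periodic (a concatenation power of the sequence h^{j,k−n+j}). -/
/-- Hamming distance between two words (lists) of the same length:
the number of positions in which they differ. -/
def hammingL {α : Type*} [DecidableEq α] (w w' : List α) : ℕ :=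
  ((w.zip w').filter fun q => decide (q.1 ≠ q.2)).length

/-- The `p`-ary reflected Gray code over words of length `m`. -/
def refGray (p : ℕ) [NeZero p] : ℕ → List (List (Fin p))
  | 0 => [[]]
  | m + 1 =>
      (List.range p).flatMap fun a =>
        (if a % 2 = 0 then refGray p m else (refGray p m).reverse).map
          fun w => (⟨a % p, Nat.mod_lt a (NeZero.pos p)⟩ : Fin p) :: w

/-- The cyclic permutation `θ : x ↦ x + 1 mod p`. -/
def cyc (p : ℕ) [NeZero p] (x : Fin p) : Fin p :=
  ⟨(x.val + 1) % p, Nat.mod_lt _ (NeZero.pos p)⟩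

/-- The sequence `h^{n,k}`: `hseq p n k i` is the term of index `i` of `h^{n,k}`.
For `k = 1` it is the `p`-ary reflected Gray code over words of length `n`; for `k ≥ 2`,
writing `i = q·p^{n-1} + r`, the term is `θ^{q+r}(0) · h^{n-1,k-1}_{[r]}`. -/
def hseq (p : ℕ) [NeZero p] : ℕ → ℕ → ℕ → List (Fin p)
  | _, 0, _ => []
  | n, 1, i => (refGray p n).getD i []
  | n, k + 2, i =>
      (cyc p)^[i / p ^ (n - 1) + i % p ^ (n - 1)] ⟨0, NeZero.pos p⟩ ::
        hseq p (n - 1) (k + 1) (i % p ^ (n - 1))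

/-- Key auxiliary lemma: the suffix of length `j` of `h^{n,k}_{[i]}` equals
`h^{j, k-n+j}_{[i mod p^j]}`. -/
lemma hseq_suffix (p : ℕ) [NeZero p] (n : ℕ) :
    ∀ k j i, 1 ≤ k → k ≤ n → n - k + 1 ≤ j → j ≤ n → i < p ^ n →
      (hseq p n k i).drop (n - j) = hseq p j (k + j - n) (i % p ^ j) := by
  induction n with
  | zero => intro k j i hk hkn; omega
  | succ m ih =>
    intro k j i hk hkn hj1 hj2 hi
    rcases eq_or_lt_of_le hj2 with rfl | hjlt
    · simp [Nat.mod_eq_of_lt hi]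
    · have hjm : j ≤ m := by omega
      have hk2 : 2 ≤ k := by omega
      obtain ⟨k', rfl⟩ : ∃ k', k = k' + 2 := ⟨k - 2, by omega⟩
      have hunf : hseq p (m + 1) (k' + 2) i =
          (cyc p)^[i / p ^ m + i % p ^ m] ⟨0, NeZero.pos p⟩ ::
            hseq p m (k' + 1) (i % p ^ m) := rfl
      rw [hunf]
      have hd : m + 1 - j = (m - j) + 1 := by omega
      rw [hd, List.drop_succ_cons]
      have := ih (k' + 1) j (i % p ^ m) (by omega) (by omega) (by omega) hjm
        (Nat.mod_lt _ (pow_pos (NeZero.pos p) m))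
      rw [this, Nat.mod_mod_of_dvd i (pow_dvd_pow p hjm)]
      congr 1
      omega

/-- For `j ∈ [n0, n]` (`n0 = n - k + 1`) and `i ∈ [0, p^n - 1]`, the suffix of length `j`
of `h^{n,k}_{[i]}` equals `h^{j, k-n+j}_{[i mod p^j]}`; in particular the sequence of
length-`j` suffixes of the terms of `h^{n,k}` is `p^j`-periodic. -/
theorem statement1 (p n k : ℕ) [NeZero p] (hp : 3 ≤ p) (hk : 1 ≤ k) (hkn : k ≤ n) :
    ∀ j, n - k + 1 ≤ j → j ≤ n →
      (∀ i < p ^ n,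
        (hseq p n k i).drop (n - j) = hseq p j (k + j - n) (i % p ^ j)) ∧
      (∀ i, i + p ^ j ≤ p ^ n - 1 →
        (hseq p n k (i + p ^ j)).drop (n - j) = (hseq p n k i).drop (n - j)) := by
  intro j hj1 hj2
  refine ⟨fun i hi => hseq_suffix p n k j i hk hkn hj1 hj2 hi, fun i hi => ?_⟩
  have hpj : 0 < p ^ j := pow_pos (NeZero.pos p) j
  have hpn : 0 < p ^ n := pow_pos (NeZero.pos p) n
  have h1 : i < p ^ n := by omega
  have h2 : i + p ^ j < p ^ n := by omega
  rw [hseq_suffix p n k j i hk hkn hj1 hj2 h1,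
      hseq_suffix p n k j (i + p ^ j) hk hkn hj1 hj2 h2,
      Nat.add_mod_right]
end

section
/- Let p ≥ 3, n ≥ k ≥ 1, and n0 = n−k+1. Let ω be the permutation of the set {h^{n0,1}_{[0]}, …, h^{n0,1}_{[p^{n0}−1]}} defined by ω(h^{n0,1}_{[i]}) = h^{n0,1}_{[i+1]} for i ∈ [0, p^{n0}−2] and ω(h^{n0,1}_{[p^{n0}−1]}) = h^{n0,1}_{[0]}. For every i ∈ [1, p^n−1]: (i) H^{[n0]}_{[i]} = ω(H^{[n0]}_{[i−1]}); (ii) for every j ∈ [n0+1, n], H^{[j]}_{[i]} = θ^2(H^{[j]}_{[i−1]}) if i ≡ 0 (mod p^{j−1}), and H^{[j]}_{[i]} = θ(H^{[j]}_{[i−1]}) otherwise. -/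
/-- The permutation `ω` on the set of terms of `h^{n0,1}`, sending `h^{n0,1}_{[i]}` to
`h^{n0,1}_{[i+1]}` for `i ∈ [0, p^{n0}-2]` and `h^{n0,1}_{[p^{n0}-1]}` to `h^{n0,1}_{[0]}`. -/
def omegaPerm (p : ℕ) [NeZero p] (n0 : ℕ) (w : List (Fin p)) : List (Fin p) :=
  (refGray p n0).getD (((refGray p n0).idxOf w + 1) % p ^ n0) []

section Aux

variable (p : ℕ) [NeZero p]

theorem refGray_length (m : ℕ) : (refGray p m).length = p ^ m := by
  induction m with
  | zero => simp [refGray]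
  | succ m ih =>
    simp only [refGray, List.length_flatMap, List.length_map]
    have : ∀ a ∈ List.range p, (List.length ((fun a =>
        (if a % 2 = 0 then refGray p m else (refGray p m).reverse).map
          fun w => (⟨a % p, Nat.mod_lt a (NeZero.pos p)⟩ : Fin p) :: w) a)) = p ^ m := by
      intro a _
      simp only [List.length_map]
      split <;> simp [ih]
    rw [List.sum_eq_card_nsmul _ _ (by simpa using this)]
    simp [pow_succ, mul_comm]

theorem refGray_nodup (m : ℕ) : (refGray p m).Nodup := by
  induction m with
  | zero => simp [refGray]
  | succ m ih =>
    rw [refGray, List.nodup_flatMap]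
    constructor
    · intro a _
      apply List.Nodup.map (fun w w' h => by injection h)
      split
      · exact ih
      · exact (List.nodup_reverse.mpr ih)
    · rw [List.pairwise_iff_getElem]
      intro i j hi hj hij
      simp only [Function.onFun, List.getElem_range]
      intro w hw hw'
      simp only [List.mem_map] at hw hw'
      obtain ⟨_, _, rfl⟩ := hw
      obtain ⟨_, _, h⟩ := hw'
      injection h with h1 _
      have := congrArg Fin.val h1
      simp only [Fin.val_mk] at this
      have hi' : i % p = i := Nat.mod_eq_of_lt (by simpa using hi)
      have hj' : j % p = j := Nat.mod_eq_of_lt (by simpa using hj)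
      omega

theorem cyc_iterate (a : ℕ) (x : Fin p) : ((cyc p)^[a] x).val = (x.val + a) % p := by
  induction a with
  | zero => simp [Nat.mod_eq_of_lt x.isLt]
  | succ a ih =>
    rw [Function.iterate_succ_apply', cyc]
    simp only [Fin.val_mk, ih, Nat.mod_add_mod]
    rw [Nat.add_assoc]

theorem hseq_drop : ∀ k n i, 1 ≤ k → k ≤ n → i < p ^ n →
    (hseq p n k i).drop (k - 1) = (refGray p (n - k + 1)).getD (i % p ^ (n - k + 1)) [] := by
  intro k
  induction k with
  | zero => omega
  | succ k ih =>
    match k, ih with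
    | 0, _ =>
      intro n i _ hkn hi
      have h1 : n - 1 + 1 = n := by omega
      rw [h1]
      simp [hseq, Nat.mod_eq_of_lt hi]
    | k + 1, ih =>
      intro n i _ hkn hi
      have hn : 1 ≤ n := by omega
      show (hseq p n (k + 2) i).drop (k + 1) = _
      rw [hseq]
      rw [List.drop_succ_cons]
      have := ih (n - 1) (i % p ^ (n - 1)) (by omega) (by omega)
        (Nat.mod_lt _ (Nat.pow_pos (NeZero.pos p)))
      rw [show (k+1) - 1 = k from rfl] at this
      rw [this]
      have h1 : n - 1 - (k + 1) + 1 = n - (k + 2) + 1 := by omega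
      have h2 : (i % p ^ (n-1)) % p ^ (n - (k+2) + 1) = i % p ^ (n - (k+2) + 1) :=
        Nat.mod_mod_of_dvd _ (pow_dvd_pow p (by omega))
      rw [h1, h2]

theorem hseq_getD : ∀ k n i j, 2 ≤ k → k ≤ n → n - k + 2 ≤ j → j ≤ n →
    (hseq p n k i).getD (n - j) ⟨0, NeZero.pos p⟩ =
      ⟨((i % p ^ j) / p ^ (j-1) + i % p ^ (j-1)) % p, Nat.mod_lt _ (NeZero.pos p)⟩ := by
  intro k
  induction k with
  | zero => omega
  | succ k ih =>
    match k, ih with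
    | 0, _ => omega
    | k + 1, ih =>
      intro n i j _ hkn hj1 hj2
      rcases eq_or_lt_of_le hj2 with rfl | hjn
      · rw [hseq]
        simp only [Nat.sub_self, List.getD_cons_zero]
        apply Fin.ext
        rw [cyc_iterate]
        simp only [Nat.zero_add]
        have : i % p ^ j / p ^ (j - 1) = i / p ^ (j-1) % p := by
          have : p ^ j = p ^ (j-1) * p := by
            rw [← pow_succ]; congr 1; omega
          rw [this, Nat.mod_mul_right_div_self]
        rw [this, Nat.mod_add_mod]
      · have hk3 : 2 ≤ k + 1 := by omega
        rw [hseq]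
        have hnj : n - j = (n - 1 - j) + 1 := by omega
        rw [hnj, List.getD_cons_succ]
        rw [ih (n-1) (i % p ^ (n-1)) j (by omega) (by omega) (by omega) (by omega)]
        have h2 : (i % p ^ (n-1)) % p ^ j = i % p ^ j :=
          Nat.mod_mod_of_dvd _ (pow_dvd_pow p (by omega))
        have h3 : (i % p ^ (n-1)) % p ^ (j-1) = i % p ^ (j-1) :=
          Nat.mod_mod_of_dvd _ (pow_dvd_pow p (by omega))
        rw [h2, h3]

end Aux

theorem key2' (p P i : ℕ) (hP : 0 < P) (h : i % P ≠ 0) :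
    (i % (P * p) / P + i % P) % p
      = ((i - 1) % (P * p) / P + (i - 1) % P + 1) % p := by
  rw [Nat.mod_mul_right_div_self, Nat.mod_mul_right_div_self]
  have hd := Nat.div_add_mod i P
  set a := i / P with ha
  set r := i % P with hr
  have hrP : r < P := Nat.mod_lt _ hP
  have e : i - 1 = (r - 1) + P * a := by omega
  have hdiv : (i - 1) / P = a := by
    rw [e, Nat.mul_comm, Nat.add_mul_div_right _ _ hP, Nat.div_eq_of_lt (by omega)]
    omega
  have hmod : (i - 1) % P = r - 1 := by
    rw [e, Nat.mul_comm, Nat.add_mul_mod_self_right, Nat.mod_eq_of_lt (by omega)]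
  rw [hdiv, hmod]
  congr 1
  omega

theorem key1' (p P i : ℕ) (hp : 3 ≤ p) (hpP : p ∣ P) (hP : 0 < P) (hi : 1 ≤ i)
    (h : i % P = 0) :
    (i % (P * p) / P + i % P) % p
      = (((i - 1) % (P * p) / P + (i - 1) % P + 1) % p + 1) % p := by
  rw [Nat.mod_mul_right_div_self, Nat.mod_mul_right_div_self]
  have hd := Nat.div_add_mod i P
  have ha1 : 1 ≤ i / P := by
    rcases Nat.eq_zero_or_pos (i / P) with h0 | h0
    · simp [h0, h] at hd; omega
    · omega
  obtain ⟨a', ha'⟩ : ∃ a', i / P = a' + 1 := ⟨i / P - 1, by omega⟩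
  have e : i - 1 = (P - 1) + P * a' := by
    have : i = P * (a' + 1) := by rw [← hd, h, ha']; ring
    rw [this]; rw [Nat.mul_add]; omega
  have hdiv : (i - 1) / P = a' := by
    rw [e, Nat.mul_comm, Nat.add_mul_div_right _ _ hP, Nat.div_eq_of_lt (by omega)]
    omega
  have hmod : (i - 1) % P = P - 1 := by
    rw [e, Nat.mul_comm, Nat.add_mul_mod_self_right, Nat.mod_eq_of_lt (by omega)]
  rw [hdiv, hmod, ha', h]
  obtain ⟨Q, rfl⟩ := hpP
  conv_rhs => rw [Nat.mod_add_mod]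
  have e2 : a' % p + (p * Q - 1) + 1 + 1 = a' % p + 1 + p * Q := by
    have : 1 ≤ p * Q := hP
    omega
  rw [e2, Nat.add_mul_mod_self_left, Nat.mod_add_mod, Nat.add_zero,
    Nat.mod_add_mod]

/-- For `j ∈ [n0+1, n]` write `H^{[j]}_{[i]}` for the character in position `j`
(counted from the right, starting at 1) of `h^{n,k}_{[i]}`; `H^{[n0]}_{[i]}` is the
suffix of length `n0` of `h^{n,k}_{[i]}`. For every `i ∈ [1, p^n-1]`:
(i) `H^{[n0]}_{[i]} = ω(H^{[n0]}_{[i-1]})`; and (ii) for every `j ∈ [n0+1, n]`,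
`H^{[j]}_{[i]} = θ²(H^{[j]}_{[i-1]})` if `p^{j-1}` divides `i`, and
`H^{[j]}_{[i]} = θ(H^{[j]}_{[i-1]})` otherwise. -/
theorem statement3 (p n k : ℕ) [NeZero p] (hp : 3 ≤ p) (hk : 1 ≤ k) (hkn : k ≤ n) :
    ∀ i, 1 ≤ i → i < p ^ n →
      ((hseq p n k i).drop (k - 1) =
          omegaPerm p (n - k + 1) ((hseq p n k (i - 1)).drop (k - 1))) ∧
      (∀ j, n - k + 2 ≤ j → j ≤ n →
        (hseq p n k i).getD (n - j) ⟨0, NeZero.pos p⟩ =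
          if i % p ^ (j - 1) = 0 then
            cyc p (cyc p ((hseq p n k (i - 1)).getD (n - j) ⟨0, NeZero.pos p⟩))
          else
            cyc p ((hseq p n k (i - 1)).getD (n - j) ⟨0, NeZero.pos p⟩)) := by
  intro i hi1 hi2
  have ppos := NeZero.pos p
  constructor
  · rw [hseq_drop p k n i hk hkn hi2, hseq_drop p k n (i-1) hk hkn (by omega)]
    set n0 := n - k + 1 with hn0
    unfold omegaPerm
    have hP : 0 < p ^ n0 := Nat.pow_pos ppos
    have hm : (i-1) % p ^ n0 < (refGray p n0).length := by
      rw [refGray_length]; exact Nat.mod_lt _ hP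
    have hidx : (refGray p n0).idxOf ((refGray p n0).getD ((i-1) % p ^ n0) [])
        = (i-1) % p ^ n0 := by
      rw [List.getD_eq_getElem?_getD, List.getElem?_eq_getElem hm, Option.getD_some]
      have hbeq : (List.instBEq : BEq (List (Fin p))) = instBEqOfDecidableEq :=
        lawful_beq_subsingleton _ _
      rw [show (List.idxOf : List (Fin p) → List (List (Fin p)) → ℕ) =
          @List.idxOf _ (@instBEqOfDecidableEq _ _) from by rw [← hbeq]]
      exact @List.Nodup.idxOf_getElem _ instBEqOfDecidableEq _ _ (refGray_nodup p n0) _ _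
    rw [hidx]
    have harith : ((i-1) % p ^ n0 + 1) % p ^ n0 = i % p ^ n0 := by
      rw [Nat.mod_add_mod]
      congr 1
      omega
    rw [harith]
  · intro j hj1 hj2
    have hk2 : 2 ≤ k := by omega
    have hj2' : 2 ≤ j := by omega
    rw [hseq_getD p k n i j hk2 hkn hj1 hj2, hseq_getD p k n (i-1) j hk2 hkn hj1 hj2]
    have hpow : p ^ j = p ^ (j-1) * p := by rw [← pow_succ]; congr 1; omega
    have hPpos : 0 < p ^ (j-1) := Nat.pow_pos ppos
    split
    · next h =>
      apply Fin.ext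
      simp only [cyc, Fin.val_mk]
      rw [hpow]
      have hkey := key1' p (p ^ (j-1)) i hp (dvd_pow_self p (by omega)) hPpos hi1 h
      simp only [Nat.mod_add_mod] at hkey ⊢
      exact hkey
    · next h =>
      apply Fin.ext
      simp only [cyc, Fin.val_mk]
      rw [hpow]
      have hkey := key2' p (p ^ (j-1)) i hPpos h
      simp only [Nat.mod_add_mod] at hkey ⊢
      exact hkey
end
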